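/- Let ≺ be a monomial ordering on ℚ(t)[p_1,…,p_k] graded by total degree. Suppose G = m + R is an operator in the Weyl algebra over ℚ(t), where m is a nonzero monomial in p_1,…,p_k of total degree d, and every monomial p^α ∂^β occurring in R satisfies ∑_{i=1}^k (α_i − β_i) < d. Then for every nonzero polynomial s ∈ ℚ(t)[p_1,…,p_k], the leading monomial of G·s with respect to ≺ equals m times the leading monomial of s. -/

import Mathlib

open scoped Classical

noncomputable section

/-- Total degree of an exponent vector. -/
def wt {k : ℕ} (d : Fin k →₀ ℕ) : ℕ := d.sum fun _ e => e

/-- The multi-derivative `∂^β` acting on `ℚ(t)[p₁,…,p_k]`, by its closed formula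
`∂^β (c·p^γ) = c (∏ᵢ γᵢ(γᵢ−1)⋯(γᵢ−βᵢ+1)) p^{γ−β}`. -/
def derivMulti {k : ℕ} (β : Fin k →₀ ℕ) (s : MvPolynomial (Fin k) (RatFunc ℚ)) :
    MvPolynomial (Fin k) (RatFunc ℚ) :=
  (AddMonoidAlgebra.coeff s).sum fun γ c =>
    if β ≤ γ then
      MvPolynomial.monomial (γ - β)
        (c * ∏ i ∈ β.support, ((γ i).descFactorial (β i) : RatFunc ℚ))
    else 0

/-- The action of the Weyl-algebra operator `G = p^μ + R` on a polynomial `s`, where the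
rest `R` is recorded as a finitely supported family `c` of coefficients `c (α, β)` of the
monomials `p^α ∂^β`. -/
def applyOp {k : ℕ} (μ : Fin k →₀ ℕ)
    (c : ((Fin k →₀ ℕ) × (Fin k →₀ ℕ)) →₀ RatFunc ℚ)
    (s : MvPolynomial (Fin k) (RatFunc ℚ)) : MvPolynomial (Fin k) (RatFunc ℚ) :=
  MvPolynomial.monomial μ 1 * s +
    c.sum fun q a => a • (MvPolynomial.monomial q.1 1 * derivMulti q.2 s)

lemma wt_add {k : ℕ} (a b : Fin k →₀ ℕ) : wt (a + b) = wt a + wt b := by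
  unfold wt
  exact Finsupp.sum_add_index' (fun _ => rfl) (fun _ _ _ => rfl)

lemma wt_tsub_add {k : ℕ} {a b : Fin k →₀ ℕ} (h : a ≤ b) :
    wt (b - a) + wt a = wt b := by
  rw [← wt_add, tsub_add_cancel_of_le h]

/-- Let `≺` be a monomial ordering on `ℚ(t)[p₁,…,p_k]` graded by total degree, and let
`G = p^μ + R` be a dominant operator: every monomial `p^α∂^β` of `R` satisfies
`∑ᵢ(αᵢ−βᵢ) < wt μ`.  Then for every nonzero `s`, the leading monomial of `G·s` is
`p^μ` times the leading monomial of `s`. -/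
theorem leadingMonomial_applyOp (k : ℕ)
    (r : LinearOrder (Fin k →₀ ℕ))
    (hadd : ∀ a b e : Fin k →₀ ℕ, r.lt a b → r.lt (a + e) (b + e))
    (hgrad : ∀ a b : Fin k →₀ ℕ, wt a < wt b → r.lt a b)
    (μ : Fin k →₀ ℕ)
    (c : ((Fin k →₀ ℕ) × (Fin k →₀ ℕ)) →₀ RatFunc ℚ)
    (hR : ∀ q ∈ c.support, ((wt q.1 : ℤ) - (wt q.2 : ℤ)) < (wt μ : ℤ))
    (s : MvPolynomial (Fin k) (RatFunc ℚ)) (hs : s ≠ 0)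
    (d₀ : Fin k →₀ ℕ) (hd₀ : d₀ ∈ s.support) (hmax : ∀ d ∈ s.support, r.le d d₀) :
    (μ + d₀) ∈ (applyOp μ c s).support ∧
      ∀ d ∈ (applyOp μ c s).support, r.le d (μ + d₀) := by
  -- weights of monomials of `s` are at most `wt d₀`
  have hwt_le : ∀ γ ∈ s.support, wt γ ≤ wt d₀ := by
    intro γ hγ
    by_contra h
    push_neg at h
    exact @lt_irrefl _ r.toPreorder d₀
      (@lt_of_lt_of_le _ r.toPreorder d₀ γ d₀ (hgrad d₀ γ h) (hmax γ hγ))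
  -- monomials of the rest term are strictly below μ + d₀
  have claim1 : ∀ q ∈ c.support, ∀ e : Fin k →₀ ℕ,
      MvPolynomial.coeff e (MvPolynomial.monomial q.1 (1 : RatFunc ℚ) * derivMulti q.2 s) ≠ 0 →
      r.lt e (μ + d₀) := by
    intro q hq e he
    rw [MvPolynomial.coeff_monomial_mul'] at he
    by_cases hle : q.1 ≤ e
    · rw [if_pos hle, one_mul] at he
      -- analyze the derivative's coefficient
      have : ∃ γ ∈ s.support, q.2 ≤ γ ∧ γ - q.2 = e - q.1 := by
        unfold derivMulti at he
        rw [Finsupp.sum] at he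
        rw [MvPolynomial.coeff_sum] at he
        obtain ⟨γ, hγ, hne⟩ := Finset.exists_ne_zero_of_sum_ne_zero he
        by_cases hβγ : q.2 ≤ γ
        · refine ⟨γ, hγ, hβγ, ?_⟩
          rw [if_pos hβγ, MvPolynomial.coeff_monomial] at hne
          by_contra hne'
          exact hne (if_neg hne')
        · rw [if_neg hβγ] at hne
          exact absurd rfl hne
      obtain ⟨γ, hγ, hβγ, heq⟩ := this
      apply hgrad
      have h1 : wt (e - q.1) + wt q.1 = wt e := wt_tsub_add hle
      have h2 : wt (γ - q.2) + wt q.2 = wt γ := wt_tsub_add hβγ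
      rw [← heq] at h1
      have hRq := hR q hq
      have hγd := hwt_le γ hγ
      have : (wt e : ℤ) < (wt μ : ℤ) + (wt d₀ : ℤ) := by
        have e1 : (wt e : ℤ) = (wt (γ - q.2) : ℤ) + (wt q.1 : ℤ) := by exact_mod_cast h1.symm
        have e2 : (wt (γ - q.2) : ℤ) = (wt γ : ℤ) - (wt q.2 : ℤ) := by omega
        rw [e1, e2]
        have : (wt γ : ℤ) ≤ (wt d₀ : ℤ) := by exact_mod_cast hγd
        omega
      rw [wt_add]
      exact_mod_cast this
    · rw [if_neg hle] at he
      exact absurd rfl he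
  -- coefficient of the rest term vanishes unless strictly below μ + d₀
  have hTcoeff : ∀ e : Fin k →₀ ℕ, ¬ r.lt e (μ + d₀) →
      MvPolynomial.coeff e
        (c.sum fun q a => a • (MvPolynomial.monomial q.1 (1 : RatFunc ℚ) * derivMulti q.2 s))
        = 0 := by
    intro e he
    rw [Finsupp.sum, MvPolynomial.coeff_sum]
    apply Finset.sum_eq_zero
    intro q hq
    rw [MvPolynomial.coeff_smul]
    rcases eq_or_ne (MvPolynomial.coeff e
        (MvPolynomial.monomial q.1 (1 : RatFunc ℚ) * derivMulti q.2 s)) 0 with h | h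
    · rw [h, smul_zero]
    · exact absurd (claim1 q hq e h) he
  have hmain : ∀ e : Fin k →₀ ℕ,
      MvPolynomial.coeff e (MvPolynomial.monomial μ (1 : RatFunc ℚ) * s)
        = if μ ≤ e then MvPolynomial.coeff (e - μ) s else 0 := by
    intro e
    rw [MvPolynomial.coeff_monomial_mul']
    split_ifs with h
    · rw [one_mul]
    · rfl
  constructor
  · rw [MvPolynomial.mem_support_iff]
    unfold applyOp
    rw [MvPolynomial.coeff_add, hmain, hTcoeff _ (@lt_irrefl _ r.toPreorder (μ + d₀)),
      if_pos le_self_add, add_tsub_cancel_left, add_zero]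
    exact MvPolynomial.mem_support_iff.mp hd₀
  · intro d hd
    rw [MvPolynomial.mem_support_iff] at hd
    unfold applyOp at hd
    rw [MvPolynomial.coeff_add] at hd
    by_cases hlt : r.lt d (μ + d₀)
    · exact @le_of_lt _ r.toPreorder _ _ hlt
    · rw [hTcoeff d hlt, add_zero, hmain] at hd
      by_cases hle : μ ≤ d
      · rw [if_pos hle] at hd
        have hmem : d - μ ∈ s.support := MvPolynomial.mem_support_iff.mpr hd
        have h1 : r.le (d - μ) d₀ := hmax _ hmem
        have hdd : μ + (d - μ) = d := add_tsub_cancel_of_le hle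
        rcases @lt_or_eq_of_le _ r.toPartialOrder _ _ h1 with h | h
        · have := hadd _ _ μ h
          rw [add_comm (d - μ) μ, add_comm d₀ μ, hdd] at this
          exact @le_of_lt _ r.toPreorder _ _ this
        · rw [← hdd, h]
          exact @le_refl _ r.toPreorder _
      · rw [if_neg hle] at hd
        exact absurd rfl hd

end
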